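/- In a Hopf quasigroup H, if S and S' are two linear maps each satisfying the Hopf quasigroup antipode axioms (S(h₍₁₎)(h₍₂₎g) = h₍₁₎(S(h₍₂₎)g) = ε(h)g and (gS(h₍₁₎))h₍₂₎ = (gh₍₁₎)S(h₍₂₎) = ε(h)g for all g, h), then S = S'. -/

import Mathlib

open TensorProduct

/-- The data of a Hopf quasigroup without its antipode: a unital (possibly nonassociative)
algebra together with a coassociative counital comultiplication which, together with the
counit, is an algebra homomorphism. Everything is expressed in terms of linear maps, so that
Sweedler-notation identities become equalities of composites of linear maps. -/
structure HopfQuasigroupData (k H : Type*) [Field k] [AddCommGroup H] [Module k H] where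
  /-- the (possibly nonassociative) multiplication -/
  mul : H ⊗[k] H →ₗ[k] H
  /-- the unit element -/
  one : H
  /-- the comultiplication -/
  comul : H →ₗ[k] H ⊗[k] H
  /-- the counit -/
  counit : H →ₗ[k] k
  one_mul : ∀ x : H, mul (one ⊗ₜ[k] x) = x
  mul_one : ∀ x : H, mul (x ⊗ₜ[k] one) = x
  coassoc : (TensorProduct.assoc k H H H).toLinearMap ∘ₗ comul.rTensor H ∘ₗ comul =
    comul.lTensor H ∘ₗ comul
  counit_comul : (TensorProduct.lid k H).toLinearMap ∘ₗ counit.rTensor H ∘ₗ comul =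
    LinearMap.id
  comul_counit : (TensorProduct.rid k H).toLinearMap ∘ₗ counit.lTensor H ∘ₗ comul =
    LinearMap.id
  comul_mul : comul ∘ₗ mul = TensorProduct.map mul mul ∘ₗ
    (TensorProduct.tensorTensorTensorComm k H H H H).toLinearMap ∘ₗ
      TensorProduct.map comul comul
  comul_one : comul one = one ⊗ₜ[k] one
  counit_mul : ∀ x y : H, counit (mul (x ⊗ₜ[k] y)) = counit x * counit y
  counit_one : counit one = 1

namespace HopfQuasigroupData

variable {k H : Type*} [Field k] [AddCommGroup H] [Module k H]

/-- The linear map `h ⊗ g ↦ ε(h)g`. -/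
noncomputable def εl (D : HopfQuasigroupData k H) : H ⊗[k] H →ₗ[k] H :=
  (TensorProduct.lid k H).toLinearMap ∘ₗ D.counit.rTensor H

/-- The linear map `g ⊗ h ↦ ε(h)g`. -/
noncomputable def εr (D : HopfQuasigroupData k H) : H ⊗[k] H →ₗ[k] H :=
  (TensorProduct.rid k H).toLinearMap ∘ₗ D.counit.lTensor H

/-- `S` is an antipode for the Hopf quasigroup data `D`:
`Σ S(h₁)(h₂g) = Σ h₁(S(h₂)g) = ε(h)g` and `Σ (gS(h₁))h₂ = Σ (gh₁)S(h₂) = ε(h)g`. -/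
def IsAntipode (D : HopfQuasigroupData k H) (S : H →ₗ[k] H) : Prop :=
  (D.mul ∘ₗ TensorProduct.map S D.mul ∘ₗ (TensorProduct.assoc k H H H).toLinearMap ∘ₗ
      D.comul.rTensor H = D.εl) ∧
  (D.mul ∘ₗ TensorProduct.map LinearMap.id (D.mul ∘ₗ S.rTensor H) ∘ₗ
      (TensorProduct.assoc k H H H).toLinearMap ∘ₗ D.comul.rTensor H = D.εl) ∧
  (D.mul ∘ₗ TensorProduct.map (D.mul ∘ₗ S.lTensor H) LinearMap.id ∘ₗ
      (TensorProduct.assoc k H H H).symm.toLinearMap ∘ₗ D.comul.lTensor H = D.εr) ∧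
  (D.mul ∘ₗ TensorProduct.map D.mul S ∘ₗ
      (TensorProduct.assoc k H H H).symm.toLinearMap ∘ₗ D.comul.lTensor H = D.εr)

end HopfQuasigroupData

/-- In a Hopf quasigroup, two linear maps each satisfying the Hopf quasigroup
antipode axioms must coincide: the antipode is unique. -/
theorem hopfQuasigroup_antipode_unique {k H : Type*} [Field k] [AddCommGroup H] [Module k H]
    (D : HopfQuasigroupData k H) (S S' : H →ₗ[k] H)
    (hS : D.IsAntipode S) (hS' : D.IsAntipode S') : S = S' := by
  obtain ⟨hS1, -, -, -⟩ := hS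
  obtain ⟨-, -, -, hS4⟩ := hS'
  set m := D.mul with hm
  set Δ := D.comul with hΔ
  -- Lemma A : Σ x₁ S'(x₂) = ε(x) • 1
  have hAleft : m ∘ₗ TensorProduct.map m S' ∘ₗ (TensorProduct.assoc k H H H).symm.toLinearMap
      ∘ₗ TensorProduct.mk k H (H ⊗[k] H) D.one = m ∘ₗ S'.lTensor H := by
    apply TensorProduct.ext'
    intro a b
    simp [m, D.one_mul]
  have lemA : ∀ x : H, m (S'.lTensor H (Δ x)) = D.counit x • D.one := by
    intro x
    have h1 := LinearMap.congr_fun hS4 (D.one ⊗ₜ[k] x)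
    have h2 := LinearMap.congr_fun hAleft (Δ x)
    simp only [LinearMap.comp_apply, LinearMap.lTensor_tmul, LinearEquiv.coe_coe,
      TensorProduct.mk_apply] at h1 h2
    rw [h2.symm.trans h1]
    simp [HopfQuasigroupData.εr, TensorProduct.smul_tmul]
  -- F : the key three-fold map
  set F : H ⊗[k] (H ⊗[k] H) →ₗ[k] H :=
    m ∘ₗ TensorProduct.map S (m ∘ₗ S'.lTensor H) with hF
  -- key1 : F ∘ (id ⊗ Δ) = S ∘ εr
  have key1 : F ∘ₗ Δ.lTensor H = S ∘ₗ D.εr := by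
    apply TensorProduct.ext'
    intro a b
    simp only [hF, LinearMap.comp_apply, LinearMap.lTensor_tmul, TensorProduct.map_tmul]
    rw [lemA b]
    simp [m, HopfQuasigroupData.εr, TensorProduct.tmul_smul, D.mul_one]
  -- aux : F ∘ assoc = m ∘ (S ⊗ m) ∘ assoc ∘ (id⊗id⊗S')
  have aux : F ∘ₗ (TensorProduct.assoc k H H H).toLinearMap =
      (m ∘ₗ TensorProduct.map S m ∘ₗ (TensorProduct.assoc k H H H).toLinearMap) ∘ₗ
        S'.lTensor (H ⊗[k] H) := by
    apply TensorProduct.ext_threefold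
    intro a b c
    simp [hF]
  have swap : S'.lTensor (H ⊗[k] H) ∘ₗ Δ.rTensor H = Δ.rTensor H ∘ₗ S'.lTensor H := by
    apply TensorProduct.ext'
    intro a b
    simp
  have fin : D.εl ∘ₗ S'.lTensor H = S' ∘ₗ D.εl := by
    apply TensorProduct.ext'
    intro a b
    simp [HopfQuasigroupData.εl, TensorProduct.smul_tmul]
  -- key2 pointwise
  have key2 : ∀ w : H ⊗[k] H,
      F ((TensorProduct.assoc k H H H).toLinearMap (Δ.rTensor H w)) = S' (D.εl w) := by
    intro w
    have e1 := LinearMap.congr_fun aux (Δ.rTensor H w)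
    have e2 := LinearMap.congr_fun swap w
    have e3 := LinearMap.congr_fun hS1 (S'.lTensor H w)
    have e4 := LinearMap.congr_fun fin w
    simp only [LinearMap.comp_apply] at e1 e2 e3 e4 ⊢
    rw [e1, e2, e3, e4]
  -- finish
  ext h
  have c1 := LinearMap.congr_fun key1 (Δ h)
  have c2 := key2 (Δ h)
  have c3 := LinearMap.congr_fun D.coassoc h
  have c4 := LinearMap.congr_fun D.comul_counit h
  have c5 := LinearMap.congr_fun D.counit_comul h
  simp only [LinearMap.comp_apply, LinearMap.id_apply] at c1 c2 c3 c4 c5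
  have hεr : D.εr (Δ h) = h := by
    simpa [HopfQuasigroupData.εr, LinearMap.comp_apply] using c4
  have hεl : D.εl (Δ h) = h := by
    simpa [HopfQuasigroupData.εl, LinearMap.comp_apply] using c5
  calc S h = S (D.εr (Δ h)) := by rw [hεr]
    _ = F (Δ.lTensor H (Δ h)) := c1.symm
    _ = F ((TensorProduct.assoc k H H H).toLinearMap ((Δ.rTensor H) (Δ h))) := by rw [c3]
    _ = S' (D.εl (Δ h)) := c2
    _ = S' h := by rw [hεl]
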